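/- Let τ ∈ ℂ with Im(τ) > 0, q = e^{πiτ}, and let n₁, n₂ > 0 be integers. For c₁: ℤ/n₁ℤ → ℂ and c₂: ℤ/n₂ℤ → ℂ, define θ_i(z) = Σ_{k∈ℤ} c_i(k) q^{k²/n_i} e^{2πikz} (absolutely convergent since |q| < 1). Then θ₁(z)·θ₂(z) = Σ_{k∈ℤ} c₃(k) q^{k²/(n₁+n₂)} e^{2πikz}, where c₃(k) = Σ_{k₁+k₂=k} c₁(k₁)c₂(k₂) q^{(k₁n₂−k₂n₁)²/(n₁n₂(n₁+n₂))}, and c₃ is periodic with period n₁+n₂. -/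
import Mathlib

open Complex Real

-- norm-summability of jacobiTheta₂ terms
lemma aux_norm_summable {τ : ℂ} (hτ : 0 < τ.im) (z : ℂ) :
    Summable fun k : ℤ => ‖jacobiTheta₂_term k z τ‖ := by
  refine ((summable_pow_mul_jacobiTheta₂_term_bound |z.im| hτ 0).of_nonneg_of_le
    (fun k => norm_nonneg _) ?_)
  intro k
  simpa only [pow_zero, one_mul] using norm_jacobiTheta₂_term_le hτ le_rfl le_rfl k

lemma aux_norm_summable_mul {n : ℕ} (hn : 0 < n) (c : ZMod n → ℂ) {τ : ℂ} (hτ : 0 < τ.im)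
    (z : ℂ) : Summable fun k : ℤ => ‖c (k : ZMod n) * jacobiTheta₂_term k z τ‖ := by
  haveI : NeZero n := ⟨hn.ne'⟩
  obtain ⟨C, hC⟩ := Finite.exists_le fun x : ZMod n => ‖c x‖
  refine ((aux_norm_summable hτ z).mul_left C).of_nonneg_of_le (fun k => norm_nonneg _) ?_
  intro k
  rw [norm_mul]
  exact mul_le_mul_of_nonneg_right (hC _) (norm_nonneg _)

def auxEquiv : ℤ × ℤ ≃ ℤ × ℤ :=
  ⟨fun p => (p.2, p.1 - p.2), fun p => (p.1 + p.2, p.1),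
    fun p => by simp, fun p => by simp⟩

theorem stmt12 (τ : ℂ) (hτ : 0 < τ.im) (n₁ n₂ : ℕ) (h₁ : 0 < n₁) (h₂ : 0 < n₂)
    (c₁ : ZMod n₁ → ℂ) (c₂ : ZMod n₂ → ℂ) (c₃ : ℤ → ℂ)
    (hc₃ : ∀ k : ℤ, c₃ k = ∑' k₁ : ℤ, c₁ (k₁ : ZMod n₁) * c₂ ((k - k₁ : ℤ) : ZMod n₂) *
      Complex.exp (Real.pi * Complex.I * τ *
        (((k₁ : ℂ) * n₂ - (k - k₁ : ℤ) * n₁) ^ 2 / (n₁ * n₂ * (n₁ + n₂))))) :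
    (∀ k : ℤ, c₃ (k + (n₁ + n₂)) = c₃ k) ∧
    (∀ z : ℂ,
      (∑' k : ℤ, c₁ (k : ZMod n₁) *
          Complex.exp (Real.pi * Complex.I * τ * ((k : ℂ) ^ 2 / n₁)) *
          Complex.exp (2 * Real.pi * Complex.I * k * z)) *
      (∑' k : ℤ, c₂ (k : ZMod n₂) *
          Complex.exp (Real.pi * Complex.I * τ * ((k : ℂ) ^ 2 / n₂)) *
          Complex.exp (2 * Real.pi * Complex.I * k * z)) =
      ∑' k : ℤ, c₃ k *
          Complex.exp (Real.pi * Complex.I * τ * ((k : ℂ) ^ 2 / (n₁ + n₂))) *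
          Complex.exp (2 * Real.pi * Complex.I * k * z)) := by
  have hN₁ : (n₁ : ℂ) ≠ 0 := Nat.cast_ne_zero.mpr h₁.ne'
  have hN₂ : (n₂ : ℂ) ≠ 0 := Nat.cast_ne_zero.mpr h₂.ne'
  have hN : ((n₁ : ℂ) + n₂) ≠ 0 := by
    have : ((n₁ + n₂ : ℕ) : ℂ) ≠ 0 := Nat.cast_ne_zero.mpr (by omega)
    push_cast at this; exact this
  constructor
  · intro k
    rw [hc₃ k, hc₃ (k + (n₁ + n₂)),
      ← (Equiv.addRight (n₁ : ℤ)).tsum_eq]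
    apply tsum_congr
    intro j
    simp only [Equiv.coe_addRight]
    have hA : ((j + (n₁ : ℤ) : ℤ) : ZMod n₁) = ((j : ℤ) : ZMod n₁) := by
      push_cast [ZMod.natCast_self]; ring
    have hB : ((k + (n₁ + n₂) - (j + (n₁ : ℤ)) : ℤ) : ZMod n₂) = ((k - j : ℤ) : ZMod n₂) := by
      push_cast [ZMod.natCast_self]; ring
    rw [hA, hB]
    congr 2
    push_cast
    ring
  · intro z
    have ht₁ : 0 < (τ / (n₁ : ℂ)).im := by
      rw [show τ / (n₁ : ℂ) = ((n₁ : ℝ)⁻¹ : ℝ) • τ by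
        rw [Complex.real_smul]; push_cast; ring]
      rw [Complex.smul_im]
      positivity
    have ht₂ : 0 < (τ / (n₂ : ℂ)).im := by
      rw [show τ / (n₂ : ℂ) = ((n₂ : ℝ)⁻¹ : ℝ) • τ by
        rw [Complex.real_smul]; push_cast; ring]
      rw [Complex.smul_im]
      positivity
    have hterm : ∀ (n : ℕ) (k : ℤ),
        Complex.exp (Real.pi * Complex.I * τ * ((k : ℂ) ^ 2 / n)) *
          Complex.exp (2 * Real.pi * Complex.I * k * z) =
        jacobiTheta₂_term k z (τ / n) := by
      intro n k
      rw [jacobiTheta₂_term, ← Complex.exp_add]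
      congr 1
      ring
    -- abbreviations
    set F : ℤ → ℂ := fun k => c₁ (k : ZMod n₁) * jacobiTheta₂_term k z (τ / n₁) with hF
    set G : ℤ → ℂ := fun k => c₂ (k : ZMod n₂) * jacobiTheta₂_term k z (τ / n₂) with hG
    have hFs := aux_norm_summable_mul h₁ c₁ ht₁ z
    have hGs := aux_norm_summable_mul h₂ c₂ ht₂ z
    have step1 : (∑' k : ℤ, c₁ (k : ZMod n₁) *
          Complex.exp (Real.pi * Complex.I * τ * ((k : ℂ) ^ 2 / n₁)) *
          Complex.exp (2 * Real.pi * Complex.I * k * z)) *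
        (∑' k : ℤ, c₂ (k : ZMod n₂) *
          Complex.exp (Real.pi * Complex.I * τ * ((k : ℂ) ^ 2 / n₂)) *
          Complex.exp (2 * Real.pi * Complex.I * k * z)) =
        ∑' p : ℤ × ℤ, F p.1 * G p.2 := by
      rw [← tsum_mul_tsum_of_summable_norm hFs hGs]
      congr 1 <;> apply tsum_congr <;> intro k
      · rw [mul_assoc, hterm]
      · rw [mul_assoc, hterm]
    have hfs : Summable fun p : ℤ × ℤ => F p.1 * G p.2 :=
      summable_mul_of_summable_norm hFs hGs
    have hgs : Summable fun p : ℤ × ℤ => F p.2 * G (p.1 - p.2) := by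
      have := (auxEquiv.summable_iff (f := fun p : ℤ × ℤ => F p.1 * G p.2)).mpr hfs
      exact this
    have step2 : (∑' p : ℤ × ℤ, F p.1 * G p.2) =
        ∑' (k : ℤ) (k₁ : ℤ), F k₁ * G (k - k₁) := by
      rw [← auxEquiv.tsum_eq (fun p : ℤ × ℤ => F p.1 * G p.2)]
      exact Summable.tsum_prod hgs
    rw [step1, step2]
    apply tsum_congr
    intro k
    rw [hc₃ k, ← tsum_mul_right, ← tsum_mul_right]
    apply tsum_congr
    intro k₁
    have hT : jacobiTheta₂_term k₁ z (τ / n₁) * jacobiTheta₂_term (k - k₁) z (τ / n₂) =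
        Complex.exp (Real.pi * Complex.I * τ *
            (((k₁ : ℂ) * n₂ - ((k - k₁ : ℤ) : ℂ) * n₁) ^ 2 / (n₁ * n₂ * (n₁ + n₂)))) *
          (Complex.exp (Real.pi * Complex.I * τ * ((k : ℂ) ^ 2 / (n₁ + n₂))) *
            Complex.exp (2 * Real.pi * Complex.I * k * z)) := by
      rw [jacobiTheta₂_term, jacobiTheta₂_term, ← Complex.exp_add, ← Complex.exp_add,
        ← Complex.exp_add]
      congr 1
      push_cast
      field_simp
      ring
    rw [hF, hG]
    simp only []
    linear_combination (c₁ (k₁ : ZMod n₁) * c₂ ((k - k₁ : ℤ) : ZMod n₂)) * hT
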